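/- Let $p$ be a prime, $n \ge 1$, $q = p^n$, let $d \ge 2$ divide $q - 1$, and let $r \in \{1, \ldots, d-1\}$. Suppose $\chi$ is a multiplicative character of $\mathbb{F}_q$ of order $d$, and suppose $t : \mathbb{F}_p \to \mathbb{F}_q^*$ is a function such that for each $j \in \{1, \ldots, d-1\}$, $\left| \sum_{\lambda \in \mathbb{F}_p} \chi^j(t(\lambda)) \right| \le C\sqrt{p}$ for some constant $C > 0$, and such that $t(\lambda) \in D$ for all $\lambda \in \mathbb{F}_p$, where $D$ is a union of $r$ cosets of the index-$d$ subgroup $H = \ker \chi$ of $\mathbb{F}_q^*$. Then $p < \frac{C^2 r d^2}{(d - r)^2}$. -/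

import Mathlib

open Finset Complex

lemma aux_geom (d : ℕ) (ζ : ℂ) (hζ : IsPrimitiveRoot ζ d) (a : ℤ) :
    ∑ j ∈ Finset.range d, ζ ^ ((j : ℤ) * a) = if (d : ℤ) ∣ a then (d : ℂ) else 0 := by
  have hrw : ∀ j ∈ Finset.range d, ζ ^ ((j:ℤ) * a) = (ζ ^ a) ^ j := by
    intro j _
    rw [mul_comm, zpow_mul, zpow_natCast]
  rw [Finset.sum_congr rfl hrw]
  by_cases h : (d:ℤ) ∣ a
  · have h1 : ζ ^ a = 1 := (hζ.zpow_eq_one_iff_dvd a).mpr h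
    simp [h1, h]
  · have hne : ζ ^ a ≠ 1 := fun hone => h ((hζ.zpow_eq_one_iff_dvd a).mp hone)
    rw [geom_sum_eq hne d]
    have hpow : (ζ ^ a) ^ d = 1 := by
      rw [← zpow_natCast, ← zpow_mul, mul_comm, zpow_mul, zpow_natCast, hζ.pow_eq_one, one_zpow]
    simp [h, hpow]

lemma aux_orth (d : ℕ) (ζ : ℂ) (hζ : IsPrimitiveRoot ζ d)
    (a b : ℕ) (ha : a < d) (hb : b < d) :
    ∑ j ∈ Finset.range d, ζ ^ ((j : ℤ) * ((b : ℤ) - a)) = if a = b then (d : ℂ) else 0 := by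
  rw [aux_geom d ζ hζ]
  have : ((d:ℤ) ∣ (b:ℤ) - a) ↔ a = b := by
    constructor
    · intro hdvd
      rcases hdvd with ⟨c, hc⟩
      have hc0 : c = 0 := by nlinarith [abs_nonneg c]
      rw [hc0, mul_zero] at hc
      omega
    · intro h; subst h; simp
  simp [this]

theorem stmt17 (p n q d r : ℕ) [Fact p.Prime] (hn : 1 ≤ n) (hq : q = p ^ n)
    (hd : 2 ≤ d) (hdq : d ∣ q - 1) (hr1 : 1 ≤ r) (hrd : r ≤ d - 1)
    (F : Type*) [Field F] [Fintype F] (hF : Fintype.card F = q)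
    (χ : MulChar F ℂ) (hχord : orderOf χ = d)
    (g : Fˣ) (hg : ∀ x : Fˣ, x ∈ Subgroup.zpowers g)
    (hχg : χ g = Complex.exp (2 * (Real.pi : ℂ) * Complex.I / d))
    (m : Fin r → ℕ) (hminj : Function.Injective m) (hmlt : ∀ k, m k < d)
    (C : ℝ) (hC : 0 < C)
    (t : ZMod p → F) (ht0 : ∀ l : ZMod p, t l ≠ 0)
    (htD : ∀ l : ZMod p, ∃ k : Fin r,
      χ (t l) = (Complex.exp (2 * (Real.pi : ℂ) * Complex.I / d)) ^ (m k))
    (hbound : ∀ j : ℕ, 1 ≤ j → j ≤ d - 1 →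
      ‖∑ l : ZMod p, (χ (t l)) ^ j‖ ≤ C * Real.sqrt p) :
    (p : ℝ) < C ^ 2 * r * d ^ 2 / ((d : ℝ) - r) ^ 2 := by
  classical
  have hp : (0 : ℕ) < p := (Fact.out : p.Prime).pos
  have hd0 : 0 < d := by omega
  set ζ : ℂ := Complex.exp (2 * (Real.pi : ℂ) * Complex.I / d) with hζdef
  have hζ : IsPrimitiveRoot ζ d := Complex.isPrimitiveRoot_exp d hd0.ne'
  have hζ0 : ζ ≠ 0 := hζ.ne_zero hd0.ne'
  have habsζ : ‖ζ‖ = 1 :=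
    Complex.norm_eq_one_of_pow_eq_one hζ.pow_eq_one hd0.ne'
  have hconj : ∀ z : ℤ, (starRingEnd ℂ) (ζ ^ z) = ζ ^ (-z) := by
    intro z
    rw [map_zpow₀, ← Complex.inv_eq_conj habsζ, inv_zpow, ← zpow_neg]
  choose k hk using htD
  -- the coefficients
  set A : ℕ → ℂ := fun j => ∑ x : Fin r, ζ ^ (-((j : ℤ) * (m x : ℤ))) with hA
  have hχpow : ∀ (l : ZMod p) (j : ℕ), (χ (t l)) ^ j = ζ ^ ((j:ℤ) * (m (k l) : ℤ)) := by
    intro l j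
    rw [hk l, ← pow_mul, ← zpow_natCast]
    congr 1
    push_cast
    ring
  -- key identity
  have hkey : ∑ j ∈ Finset.range d, (A j) * (∑ l : ZMod p, (χ (t l)) ^ j)
      = (d : ℂ) * p := by
    have hstep : ∀ j ∈ Finset.range d, A j * (∑ l : ZMod p, (χ (t l)) ^ j)
        = ∑ l : ZMod p, ∑ x : Fin r, ζ ^ ((j:ℤ) * ((m (k l) : ℤ) - (m x : ℤ))) := by
      intro j _
      rw [Finset.mul_sum]
      refine Finset.sum_congr rfl fun l _ => ?_
      rw [hχpow l j, hA]
      rw [Finset.sum_mul]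
      refine Finset.sum_congr rfl fun x _ => ?_
      rw [← zpow_add₀ hζ0]
      congr 1
      ring
    rw [Finset.sum_congr rfl hstep, Finset.sum_comm]
    have h2 : ∀ l : ZMod p,
        (∑ j ∈ Finset.range d, ∑ x : Fin r, ζ ^ ((j:ℤ) * ((m (k l):ℤ) - m x))) = (d:ℂ) := by
      intro l
      rw [Finset.sum_comm]
      have h3 : ∀ x : Fin r, (∑ j ∈ Finset.range d, ζ ^ ((j:ℤ) * ((m (k l):ℤ) - m x)))
          = if x = k l then (d:ℂ) else 0 := by
        intro x
        rw [aux_orth d ζ hζ (m x) (m (k l)) (hmlt x) (hmlt (k l))]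
        simp [hminj.eq_iff]
      rw [Finset.sum_congr rfl fun x _ => h3 x]
      simp
    rw [Finset.sum_congr rfl fun l _ => h2 l]
    simp [Finset.card_univ, ZMod.card p, mul_comm]
  -- split off j = 0
  have hA0 : A 0 = (r : ℂ) := by simp [hA]
  have hS0 : (∑ l : ZMod p, (χ (t l)) ^ (0:ℕ)) = (p : ℂ) := by
    simp [Finset.card_univ, ZMod.card p]
  have hsplit : ∑ j ∈ Finset.range d, (A j) * (∑ l : ZMod p, (χ (t l)) ^ j)
      = (r : ℂ) * p + ∑ j ∈ Finset.Ico 1 d, (A j) * (∑ l : ZMod p, (χ (t l)) ^ j) := by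
    rw [Finset.range_eq_Ico, Finset.sum_eq_sum_Ico_succ_bot hd0, hA0, hS0]
  have hZ : ∑ j ∈ Finset.Ico 1 d, (A j) * (∑ l : ZMod p, (χ (t l)) ^ j)
      = ((d : ℂ) - r) * p := by
    have := hkey
    rw [hsplit] at this
    linear_combination this
  -- abs bounds
  have hrltd : r < d := by omega
  have hDpos : (0:ℝ) < (d:ℝ) - r := by
    have : (r:ℝ) < d := by exact_mod_cast hrltd
    linarith
  have habsA : ∀ j : ℕ, ‖A j‖ ≤ (r:ℝ) := by
    intro j
    rw [hA]
    refine le_trans (norm_sum_le _ _) ?_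
    have : ∀ x : Fin r, ‖ζ ^ (-((j:ℤ) * (m x:ℤ)))‖ = 1 := by
      intro x
      rw [norm_zpow, habsζ, one_zpow]
    rw [Finset.sum_congr rfl fun x _ => this x]
    simp
  -- T bound via Cauchy-Schwarz
  set T : ℝ := ∑ j ∈ Finset.range d, ‖A j‖ with hT
  have hsumsq : ∑ j ∈ Finset.range d, (‖A j‖)^2 = (d:ℝ) * r := by
    have hcplx : ∑ j ∈ Finset.range d, (A j) * (starRingEnd ℂ) (A j)
        = (d : ℂ) * r := by
      have hstep : ∀ j ∈ Finset.range d, (A j) * (starRingEnd ℂ) (A j)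
          = ∑ x : Fin r, ∑ y : Fin r, ζ ^ ((j:ℤ) * ((m y:ℤ) - (m x:ℤ))) := by
        intro j _
        rw [hA]
        rw [map_sum, Finset.sum_mul]
        refine Finset.sum_congr rfl fun x _ => ?_
        rw [Finset.mul_sum]
        refine Finset.sum_congr rfl fun y _ => ?_
        rw [hconj, ← zpow_add₀ hζ0]
        congr 1
        ring
      rw [Finset.sum_congr rfl hstep, Finset.sum_comm]
      have h2 : ∀ x : Fin r,
          (∑ j ∈ Finset.range d, ∑ y : Fin r, ζ ^ ((j:ℤ) * ((m y:ℤ) - m x))) = (d:ℂ) := by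
        intro x
        rw [Finset.sum_comm]
        have h3 : ∀ y : Fin r, (∑ j ∈ Finset.range d, ζ ^ ((j:ℤ) * ((m y:ℤ) - m x)))
            = if y = x then (d:ℂ) else 0 := by
          intro y
          rw [aux_orth d ζ hζ (m x) (m y) (hmlt x) (hmlt y)]
          simp [hminj.eq_iff, eq_comm]
        rw [Finset.sum_congr rfl fun y _ => h3 y]
        simp
      rw [Finset.sum_congr rfl fun x _ => h2 x]
      simp [mul_comm]
    have : ((∑ j ∈ Finset.range d, (‖A j‖)^2 : ℝ) : ℂ) = ((d:ℝ) * r : ℝ) := by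
      push_cast
      rw [← hcplx]
      refine Finset.sum_congr rfl fun j _ => ?_
      rw [Complex.mul_conj]
      norm_cast
      exact Complex.sq_norm _
    exact_mod_cast this
  have hTnonneg : 0 ≤ T := Finset.sum_nonneg fun j _ => norm_nonneg _
  have hTsq : T^2 ≤ (d:ℝ)^2 * r := by
    have := sq_sum_le_card_mul_sum_sq (s := Finset.range d)
      (f := fun j => ‖A j‖)
    rw [hsumsq] at this
    simpa [sq, mul_assoc] using this
  have hsqrtr : (0:ℝ) ≤ r := by positivity
  have hTle : T ≤ (d:ℝ) * Real.sqrt r := by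
    nlinarith [Real.sq_sqrt hsqrtr, Real.sqrt_nonneg (r:ℝ), hTnonneg,
      mul_nonneg (Nat.cast_nonneg (α := ℝ) d) (Real.sqrt_nonneg (r:ℝ))]
  -- sum over Ico 1 d of abs A
  have hTIco : ∑ j ∈ Finset.Ico 1 d, ‖A j‖ = T - r := by
    rw [hT, Finset.range_eq_Ico, Finset.sum_eq_sum_Ico_succ_bot hd0, hA0]
    simp
  -- main inequality
  have hsqrtp : (0:ℝ) < Real.sqrt p := Real.sqrt_pos.mpr (by exact_mod_cast hp)
  have hCp : (0:ℝ) < C * Real.sqrt p := by positivity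
  have hmain : ((d:ℝ) - r) * p ≤ (T - r) * (C * Real.sqrt p) := by
    have h1 : ‖((d:ℂ) - r) * p‖ = ((d:ℝ) - r) * p := by
      have : ((d:ℂ) - r) * p = ((((d:ℝ) - r) * p : ℝ) : ℂ) := by push_cast; ring
      rw [this, Complex.norm_real, Real.norm_eq_abs, _root_.abs_of_nonneg]
      positivity
    rw [← h1, ← hZ]
    refine le_trans (norm_sum_le _ _) ?_
    rw [← hTIco, Finset.sum_mul]
    refine Finset.sum_le_sum fun j hj => ?_
    rw [norm_mul]
    refine mul_le_mul_of_nonneg_left ?_ (norm_nonneg _)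
    rw [Finset.mem_Ico] at hj
    exact hbound j hj.1 (by omega)
  have hstrict : ((d:ℝ) - r) * p < ((d:ℝ) * Real.sqrt r) * (C * Real.sqrt p) := by
    have hr0 : (0:ℝ) < r := by exact_mod_cast hr1
    have : (T - r) < (d:ℝ) * Real.sqrt r := by linarith
    calc ((d:ℝ) - r) * p ≤ (T - r) * (C * Real.sqrt p) := hmain
      _ < ((d:ℝ) * Real.sqrt r) * (C * Real.sqrt p) := by
          exact mul_lt_mul_of_pos_right this hCp
  -- finish
  have hps : Real.sqrt p * Real.sqrt p = (p:ℝ) := Real.mul_self_sqrt (by positivity)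
  have h2 : ((d:ℝ) - r) * Real.sqrt p < C * d * Real.sqrt r := by
    apply (mul_lt_mul_iff_of_pos_right hsqrtp).mp
    calc ((d:ℝ) - r) * Real.sqrt p * Real.sqrt p = ((d:ℝ) - r) * p := by
          rw [mul_assoc, hps]
      _ < ((d:ℝ) * Real.sqrt r) * (C * Real.sqrt p) := hstrict
      _ = C * d * Real.sqrt r * Real.sqrt p := by ring
  have hsq : (((d:ℝ) - r) * Real.sqrt p)^2 < (C * d * Real.sqrt r)^2 := by
    have hlhs : 0 ≤ ((d:ℝ) - r) * Real.sqrt p := by positivity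
    exact pow_lt_pow_left₀ h2 hlhs (by norm_num)
  have hrs : Real.sqrt r * Real.sqrt r = (r:ℝ) := Real.mul_self_sqrt hsqrtr
  have hfinal : ((d:ℝ)-r)^2 * p < C^2 * d^2 * r := by
    have e1 : (((d:ℝ) - r) * Real.sqrt p)^2 = ((d:ℝ)-r)^2 * p := by
      rw [mul_pow]; congr 1; rw [sq, hps]
    have e2 : (C * (d:ℝ) * Real.sqrt r)^2 = C^2 * (d:ℝ)^2 * r := by
      rw [mul_pow, mul_pow]; congr 1; rw [sq, hrs]
    rw [← e1, ← e2]; exact hsq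
  rw [lt_div_iff₀ (by positivity : (0:ℝ) < ((d:ℝ) - r)^2)]
  calc (p:ℝ) * ((d:ℝ)-r)^2 = ((d:ℝ)-r)^2 * p := by ring
    _ < C^2 * (d:ℝ)^2 * r := hfinal
    _ = C^2 * r * (d:ℝ)^2 := by ring
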